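/- arXiv:1005.1260 — 2 statements merged into one kernel-verified Lean document; each statement's English description precedes it below -/
import Mathlib

section
/- Let q > 2 be real and let B_q = √2 · (Γ((q+1)/2)/√π)^{1/q} be the best constant in the Khintchine inequality. Then 2^{2/q} < 1 + 1/B_q², equivalently 2^{2/q} < 1 + (1/2)·(√π/Γ((q+1)/2))^{2/q}. -/
open Real

/-- Log-convexity chord bound for the Gamma function. -/
lemma gamma_chord {x y θ : ℝ} (hx : 0 < x) (hy : 0 < y) (hθ : 0 ≤ θ) (hθ1 : θ ≤ 1) :
    Gamma (θ * x + (1 - θ) * y) ≤ Gamma x ^ θ * Gamma y ^ (1 - θ) := by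
  have hz : 0 < θ * x + (1 - θ) * y := by
    rcases eq_or_lt_of_le hθ with h | h
    · rw [← h]; nlinarith
    · nlinarith
  have h := convexOn_log_Gamma.2 (Set.mem_Ioi.mpr hx) (Set.mem_Ioi.mpr hy) hθ
      (show (0:ℝ) ≤ 1 - θ by linarith) (show θ + (1 - θ) = 1 by ring)
  simp only [smul_eq_mul, Function.comp_apply] at h
  calc Gamma (θ * x + (1 - θ) * y) = exp (log (Gamma (θ * x + (1 - θ) * y))) :=
        (exp_log (Gamma_pos_of_pos hz)).symm
    _ ≤ exp (θ * log (Gamma x) + (1 - θ) * log (Gamma y)) := exp_le_exp.mpr h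
    _ = Gamma x ^ θ * Gamma y ^ (1 - θ) := by
        rw [rpow_def_of_pos (Gamma_pos_of_pos hx), rpow_def_of_pos (Gamma_pos_of_pos hy),
          ← exp_add]
        congr 1; ring

lemma gamma_three_halves : Gamma (3 / 2) = Real.sqrt π / 2 := by
  rw [show (3 / 2 : ℝ) = 1 / 2 + 1 by norm_num, Gamma_add_one (by norm_num), Gamma_one_half_eq]
  ring

lemma gamma_five_halves : Gamma (5 / 2) = 3 * Real.sqrt π / 4 := by
  rw [show (5 / 2 : ℝ) = 3 / 2 + 1 by norm_num, Gamma_add_one (by norm_num), gamma_three_halves]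
  ring

lemma gamma_two' : Gamma (2 : ℝ) = 1 := by
  rw [show (2 : ℝ) = 1 + 1 by norm_num, Gamma_add_one (by norm_num), Gamma_one]
  ring

/-- Numeric fact: `3 log 2 ≤ log π + 1`, i.e. `8 ≤ e π`. -/
lemma log_fact1 : 3 * log 2 ≤ log π + 1 := by
  have hπ : (3.141592 : ℝ) < π := pi_gt_d6
  have h1 : log (3 : ℝ) - log π ≤ 3 / π - 1 := by
    have := log_le_sub_one_of_pos (show (0 : ℝ) < 3 / π by positivity)
    rwa [log_div (by norm_num) (by positivity)] at this
  have h2 : 2 * log 2 - log 3 ≤ 1 / 3 := by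
    have := log_le_sub_one_of_pos (show (0 : ℝ) < 4 / 3 by norm_num)
    rw [log_div (by norm_num) (by norm_num), show (4 : ℝ) = 2 ^ 2 by norm_num, log_pow] at this
    push_cast at this; linarith
  have h3 : log 2 < 0.6931471808 := log_two_lt_d9
  have h4 : (0.6931471803 : ℝ) < log 2 := log_two_gt_d9
  have h5 : 3 / π < 0.95493 := by
    rw [div_lt_iff₀ (by positivity)]; nlinarith
  linarith

/-- Numeric fact: `6 log 2 ≤ log π + 3 log 3`, i.e. `64 ≤ 27 π`. -/
lemma log_fact2 : 6 * log 2 ≤ log π + 3 * log 3 := by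
  have hπ : (3.141592 : ℝ) < π := pi_gt_d6
  have h1 : log (3 : ℝ) - log π ≤ 3 / π - 1 := by
    have := log_le_sub_one_of_pos (show (0 : ℝ) < 3 / π by positivity)
    rwa [log_div (by norm_num) (by positivity)] at this
  have h2 : 2 * log 2 - log 3 ≤ 1 / 3 := by
    have := log_le_sub_one_of_pos (show (0 : ℝ) < 4 / 3 by norm_num)
    rw [log_div (by norm_num) (by norm_num), show (4 : ℝ) = 2 ^ 2 by norm_num, log_pow] at this
    push_cast at this; linarith
  have h3 : log 2 < 0.6931471808 := log_two_lt_d9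
  have h4 : (0.6931471803 : ℝ) < log 2 := log_two_gt_d9
  have h5 : 3 / π < 0.95493 := by
    rw [div_lt_iff₀ (by positivity)]; nlinarith
  linarith

/-- Numeric fact: `2 log 2 - log 3 ≤ 1/2`. -/
lemma log_fact3 : 2 * log 2 - log 3 ≤ 1 / 2 := by
  have h2 : 2 * log 2 - log 3 ≤ 1 / 3 := by
    have := log_le_sub_one_of_pos (show (0 : ℝ) < 4 / 3 by norm_num)
    rw [log_div (by norm_num) (by norm_num), show (4 : ℝ) = 2 ^ 2 by norm_num, log_pow] at this
    push_cast at this; linarith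
  linarith

lemma sqrtpi_pos : 0 < Real.sqrt π := sqrt_pos.mpr pi_pos

/-- Main Gamma bound on `[2,3]`. -/
lemma gamma_bound_23 {q : ℝ} (h2 : 2 ≤ q) (h3 : q ≤ 3) :
    Gamma ((q + 1) / 2) ≤ Real.sqrt π * (q / 4) ^ (q / 2) := by
  have hq0 : 0 < q := by linarith
  have key : Gamma ((q + 1) / 2) ≤ (Real.sqrt π / 2) ^ (3 - q) := by
    have h := gamma_chord (x := 3 / 2) (y := 2) (θ := 3 - q) (by norm_num) (by norm_num)
      (by linarith) (by linarith)
    rw [gamma_three_halves, gamma_two', one_rpow, mul_one] at h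
    calc Gamma ((q + 1) / 2) = Gamma ((3 - q) * (3 / 2) + (1 - (3 - q)) * 2) := by ring_nf
      _ ≤ (Real.sqrt π / 2) ^ (3 - q) := h
  refine key.trans ?_
  -- compare logs
  have hL : 0 < (Real.sqrt π / 2 : ℝ) := by positivity
  have hR : 0 < Real.sqrt π * (q / 4) ^ (q / 2) := by positivity
  rw [← log_le_log_iff (by positivity) hR, log_rpow hL, log_mul (by positivity)
    (by positivity), log_rpow (by positivity), log_div (by positivity) (by norm_num),
    log_sqrt pi_pos.le]
  have ha : (q - 2) / q ≤ log (q / 2) := by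
    have := log_le_sub_one_of_pos (show (0 : ℝ) < 2 / q by positivity)
    rw [log_div (by norm_num) (by positivity)] at this
    have h' : log (q / 2) = log q - log 2 := log_div (by positivity) (by norm_num)
    have h4 : (2 : ℝ) / q - 1 = -((q - 2) / q) := by field_simp; ring
    rw [h4] at this
    linarith
  have hq4 : log (q / 4) = log (q / 2) - log 2 := by
    rw [show q / 4 = q / 2 / 2 by ring, log_div (by positivity) (by norm_num)]
  rw [hq4]
  have hqa : (q - 2) / 2 ≤ q / 2 * log (q / 2) := by
    have h := mul_le_mul_of_nonneg_left ha (show (0 : ℝ) ≤ q / 2 by positivity)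
    calc (q - 2) / 2 = q / 2 * ((q - 2) / q) := by field_simp
      _ ≤ q / 2 * log (q / 2) := h
  nlinarith [log_fact1, mul_nonneg (show (0:ℝ) ≤ q - 2 by linarith)
    (show (0:ℝ) ≤ log π + 1 - 3 * log 2 by linarith [log_fact1])]

/-- Main Gamma bound on `[3,4]`. -/
lemma gamma_bound_34 {q : ℝ} (h3 : 3 ≤ q) (h4 : q ≤ 4) :
    Gamma ((q + 1) / 2) ≤ Real.sqrt π * (q / 4) ^ (q / 2) := by
  have hq0 : 0 < q := by linarith
  have key : Gamma ((q + 1) / 2) ≤ (3 * Real.sqrt π / 4) ^ (q - 3) := by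
    have h := gamma_chord (x := 2) (y := 5 / 2) (θ := 4 - q) (by norm_num) (by norm_num)
      (by linarith) (by linarith)
    rw [gamma_two', gamma_five_halves, one_rpow, one_mul] at h
    calc Gamma ((q + 1) / 2) = Gamma ((4 - q) * 2 + (1 - (4 - q)) * (5 / 2)) := by ring_nf
      _ ≤ (3 * Real.sqrt π / 4) ^ (1 - (4 - q)) := h
      _ = (3 * Real.sqrt π / 4) ^ (q - 3) := by ring_nf
  refine key.trans ?_
  have hL : 0 < (3 * Real.sqrt π / 4 : ℝ) := by positivity
  have hR : 0 < Real.sqrt π * (q / 4) ^ (q / 2) := by positivity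
  rw [← log_le_log_iff (by positivity) hR, log_rpow hL, log_mul (by positivity)
    (by positivity), log_rpow (by positivity), log_div (by positivity) (by norm_num),
    log_mul (by norm_num) (by positivity), log_sqrt pi_pos.le,
    show (4 : ℝ) = 2 ^ 2 by norm_num, log_pow]
  push_cast
  have ha : (q - 3) / q ≤ log (q / 3) := by
    have := log_le_sub_one_of_pos (show (0 : ℝ) < 3 / q by positivity)
    rw [log_div (by norm_num) (by positivity)] at this
    have h' : log (q / 3) = log q - log 3 := log_div (by positivity) (by norm_num)
    have h4' : (3 : ℝ) / q - 1 = -((q - 3) / q) := by field_simp; ring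
    rw [h4'] at this
    linarith
  have hq4 : log (q / (2 ^ 2 : ℝ)) = log (q / 3) + log 3 - 2 * log 2 := by
    rw [show q / (2 ^ 2 : ℝ) = q / 3 * 3 / 2 ^ 2 by ring,
      log_div (by positivity) (by norm_num), log_mul (by positivity) (by norm_num), log_pow]
    push_cast; ring
  norm_num at hq4 ⊢
  rw [hq4]
  have hqa : (q - 3) / 2 ≤ q / 2 * log (q / 3) := by
    have h := mul_le_mul_of_nonneg_left ha (show (0 : ℝ) ≤ q / 2 by positivity)
    calc (q - 3) / 2 = q / 2 * ((q - 3) / q) := by field_simp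
      _ ≤ q / 2 * log (q / 3) := h
  nlinarith [log_fact2, log_fact3,
    mul_nonneg (show (0:ℝ) ≤ 4 - q by linarith)
      (show (0:ℝ) ≤ log π / 2 + 3 / 2 * log 3 - 3 * log 2 by linarith [log_fact2]),
    mul_nonneg (show (0:ℝ) ≤ q - 3 by linarith)
      (show (0:ℝ) ≤ log 3 - 2 * log 2 + 1 / 2 by linarith [log_fact3])]

/-- Main Gamma bound, all `q ≥ 2`: `Γ((q+1)/2) ≤ √π (q/4)^(q/2)`. -/
lemma gamma_bound {q : ℝ} (h2 : 2 ≤ q) :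
    Gamma ((q + 1) / 2) ≤ Real.sqrt π * (q / 4) ^ (q / 2) := by
  obtain ⟨n, hn⟩ := exists_nat_ge q
  have aux : ∀ n : ℕ, ∀ q : ℝ, 2 ≤ q → q ≤ 2 + 2 * n →
      Gamma ((q + 1) / 2) ≤ Real.sqrt π * (q / 4) ^ (q / 2) := by
    intro n
    induction n with
    | zero => intro q hq hq'; norm_num at hq'
              have : q = 2 := le_antisymm hq' hq
              subst this; exact gamma_bound_23 le_rfl (by norm_num)
    | succ n ih =>
      intro q hq hq'
      rcases le_or_gt q 4 with h | h
      · rcases le_or_gt q 3 with h' | h'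
        · exact gamma_bound_23 hq h'
        · exact gamma_bound_34 h'.le h
      · -- induction step: q > 4
        have hq2 : 2 ≤ q - 2 := by linarith
        have hq2' : q - 2 ≤ 2 + 2 * n := by push_cast at hq' ⊢; linarith
        have IH := ih (q - 2) hq2 hq2'
        have hrec : Gamma ((q + 1) / 2) = (q - 1) / 2 * Gamma ((q - 1) / 2) := by
          rw [show (q + 1) / 2 = (q - 1) / 2 + 1 by ring,
            Gamma_add_one (ne_of_gt (show (0:ℝ) < (q - 1) / 2 by linarith))]
        have IH' : Gamma ((q - 1) / 2) ≤ Real.sqrt π * ((q - 2) / 4) ^ ((q - 2) / 2) := by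
          have : (q - 2 + 1) / 2 = (q - 1) / 2 := by ring
          rw [this] at IH; exact IH
        rw [hrec]
        have hstep : (q - 1) / 2 * (Real.sqrt π * ((q - 2) / 4) ^ ((q - 2) / 2))
            ≤ Real.sqrt π * (q / 4) ^ (q / 2) := by
          have hq20 : (0 : ℝ) < q - 2 := by linarith
          have hBer : (2 : ℝ) ≤ (q / (q - 2)) ^ ((q - 2) / 2) := by
            have hb := one_add_mul_self_le_rpow_one_add
              (show (-1 : ℝ) ≤ 2 / (q - 2) by
                have : (0:ℝ) ≤ 2 / (q - 2) := by positivity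
                linarith)
              (show (1 : ℝ) ≤ (q - 2) / 2 by linarith)
            have e1 : (1 : ℝ) + (q - 2) / 2 * (2 / (q - 2)) = 2 := by
              rw [div_mul_div_comm]
              rw [show (q - 2) * 2 = 2 * (q - 2) by ring, div_self (by positivity)]
              norm_num
            have e2 : (1 : ℝ) + 2 / (q - 2) = q / (q - 2) := by field_simp; ring
            rw [e1, e2] at hb; exact hb
          have hsplit : (q / 4 : ℝ) ^ (q / 2)
              = ((q - 2) / 4) ^ ((q - 2) / 2) * (q / (q - 2)) ^ ((q - 2) / 2) * (q / 4) := by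
            rw [← mul_rpow (by positivity) (by positivity),
              show (q - 2) / 4 * (q / (q - 2)) = q / 4 by field_simp,
              ← rpow_add_one (by positivity : (q / 4 : ℝ) ≠ 0)]
            rw [show (q - 2) / 2 + 1 = q / 2 by ring]
          rw [hsplit]
          have hA : (0 : ℝ) < ((q - 2) / 4) ^ ((q - 2) / 2) := by positivity
          calc (q - 1) / 2 * (Real.sqrt π * ((q - 2) / 4) ^ ((q - 2) / 2))
              ≤ 2 * (q / 4) * (Real.sqrt π * ((q - 2) / 4) ^ ((q - 2) / 2)) := by
                apply mul_le_mul_of_nonneg_right _ (by positivity)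
                linarith
            _ ≤ (q / (q - 2)) ^ ((q - 2) / 2) * (q / 4)
                * (Real.sqrt π * ((q - 2) / 4) ^ ((q - 2) / 2)) := by
                apply mul_le_mul_of_nonneg_right _ (by positivity)
                apply mul_le_mul_of_nonneg_right hBer (by positivity)
            _ = Real.sqrt π * (((q - 2) / 4) ^ ((q - 2) / 2)
                * (q / (q - 2)) ^ ((q - 2) / 2) * (q / 4)) := by ring
        calc (q - 1) / 2 * Gamma ((q - 1) / 2)
            ≤ (q - 1) / 2 * (Real.sqrt π * ((q - 2) / 4) ^ ((q - 2) / 2)) := by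
              apply mul_le_mul_of_nonneg_left IH' (by linarith)
          _ ≤ Real.sqrt π * (q / 4) ^ (q / 2) := hstep
  exact aux n q h2 (by push_cast; linarith)

/-- `2^x < 1 + x` for `0 < x < 1`. -/
lemma two_rpow_lt_one_add {x : ℝ} (h0 : 0 < x) (h1 : x < 1) : (2 : ℝ) ^ x < 1 + x := by
  have hne : (0 : ℝ) ≠ log 2 := by
    have := log_two_gt_d9; intro h; rw [← h] at this; norm_num at this
  have h := strictConvexOn_exp.2 (Set.mem_univ (0 : ℝ)) (Set.mem_univ (log 2)) hne
    (show 0 < 1 - x by linarith) h0 (by ring)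
  simp only [smul_eq_mul, mul_zero, zero_add, exp_zero, exp_log two_pos] at h
  rw [rpow_def_of_pos two_pos]
  calc exp (log 2 * x) = exp (x * log 2) := by rw [mul_comm]
    _ < (1 - x) * 1 + x * 2 := h
    _ = 1 + x := by ring

theorem stmt3 (q : ℝ) (hq : 2 < q)
    (Bq : ℝ) (hBq : Bq = Real.sqrt 2 * (Real.Gamma ((q + 1) / 2) / Real.sqrt Real.pi) ^ (1 / q)) :
    (2 : ℝ) ^ (2 / q) < 1 + 1 / Bq ^ 2 ∧
    (2 : ℝ) ^ (2 / q) < 1 + (1 / 2) * (Real.sqrt Real.pi / Real.Gamma ((q + 1) / 2)) ^ (2 / q) := by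
  have hq0 : 0 < q := by linarith
  set G := Real.Gamma ((q + 1) / 2) with hG
  have hGpos : 0 < G := Gamma_pos_of_pos (by linarith)
  have hπ : 0 < Real.sqrt π := sqrtpi_pos
  have hmain : G ≤ Real.sqrt π * (q / 4) ^ (q / 2) := gamma_bound hq.le
  -- key: 4/q ≤ (√π / G)^(2/q)
  have h1 : (4 / q : ℝ) ^ (q / 2) ≤ Real.sqrt π / G := by
    rw [le_div_iff₀ hGpos]
    calc (4 / q : ℝ) ^ (q / 2) * G
        ≤ (4 / q : ℝ) ^ (q / 2) * (Real.sqrt π * (q / 4) ^ (q / 2)) := by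
          apply mul_le_mul_of_nonneg_left hmain (by positivity)
      _ = Real.sqrt π * ((4 / q) ^ (q / 2) * (q / 4) ^ (q / 2)) := by ring
      _ = Real.sqrt π := by
          rw [← mul_rpow (by positivity) (by positivity),
            show (4 / q) * (q / 4) = (1 : ℝ) by field_simp, one_rpow, mul_one]
  have h3 : (4 / q : ℝ) ≤ (Real.sqrt π / G) ^ (2 / q) := by
    have hh := rpow_le_rpow (by positivity : (0:ℝ) ≤ (4 / q : ℝ) ^ (q / 2)) h1
      (by positivity : (0:ℝ) ≤ 2 / q)
    rwa [← rpow_mul (by positivity : (0:ℝ) ≤ (4 / q : ℝ)),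
      show q / 2 * (2 / q) = 1 by field_simp, rpow_one] at hh
  have hkey : 2 / q ≤ 1 / 2 * (Real.sqrt π / G) ^ (2 / q) := by
    conv_lhs => rw [show (2 / q : ℝ) = 1 / 2 * (4 / q) by ring]
    linarith
  have hlt : (2 : ℝ) ^ (2 / q) < 1 + 2 / q :=
    two_rpow_lt_one_add (by positivity) (by rw [div_lt_one hq0]; linarith)
  have hsecond : (2 : ℝ) ^ (2 / q) < 1 + 1 / 2 * (Real.sqrt π / G) ^ (2 / q) := by linarith
  constructor
  · -- rewrite 1 / Bq^2 as (1/2) (√π/G)^(2/q)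
    have hBq2 : Bq ^ 2 = 2 * (G / Real.sqrt π) ^ (2 / q) := by
      rw [hBq]
      rw [mul_pow, sq_sqrt (by norm_num : (0:ℝ) ≤ 2)]
      congr 1
      rw [← rpow_natCast ((G / Real.sqrt π) ^ (1 / q)) 2,
        ← rpow_mul (by positivity : (0:ℝ) ≤ G / Real.sqrt π)]
      norm_num
      congr 1
      ring
    have hinv : 1 / Bq ^ 2 = 1 / 2 * (Real.sqrt π / G) ^ (2 / q) := by
      rw [hBq2, one_div, mul_inv, ← inv_rpow (by positivity : (0:ℝ) ≤ G / Real.sqrt π),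
        inv_div]
      norm_num
    rw [hinv]; exact hsecond
  · exact hsecond
end

section
/- Let E, F be Banach spaces, n ≥ 2, and suppose F ⊆ E is a 1-complemented subspace (there is a norm-one projection π : E → F). If P_w(ⁿE) is an M-ideal in P(ⁿE), then P_w(ⁿF) is an M-ideal in P(ⁿF). -/
open Filter Topology

universe u v

section PolyDefs

variable {E : Type u} [NormedAddCommGroup E] [NormedSpace ℝ E]

/-- `P` is a continuous `n`-homogeneous scalar polynomial on `E`. -/
def IsHomogPoly (n : ℕ) (P : E → ℝ) : Prop :=
  ∃ M : ContinuousMultilinearMap ℝ (fun _ : Fin n => E) ℝ, ∀ x, P x = M (fun _ => x)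

/-- The polynomial (sup) norm: `‖P‖ = sup_{‖x‖ ≤ 1} |P x|`. -/
noncomputable def polyNorm (P : E → ℝ) : ℝ :=
  sSup {r : ℝ | ∃ x : E, ‖x‖ ≤ 1 ∧ r = |P x|}

/-- A net is (norm) bounded. -/
def BoundedNet {ι : Type v} (x : ι → E) : Prop := ∃ C : ℝ, ∀ i, ‖x i‖ ≤ C

/-- The net `x` converges weakly to `x₀` along the filter `l`. -/
def WeaklyTendsto {ι : Type v} (x : ι → E) (l : Filter ι) (x₀ : E) : Prop :=
  ∀ γ : E →L[ℝ] ℝ, Tendsto (fun i => γ (x i)) l (𝓝 (γ x₀))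

/-- `P` is weakly continuous on bounded sets at the point `x₀`. -/
def WCBat (P : E → ℝ) (x₀ : E) : Prop :=
  ∀ (ι : Type u) (l : Filter ι), l.NeBot → ∀ x : ι → E,
    BoundedNet x → WeaklyTendsto x l x₀ → Tendsto (fun i => P (x i)) l (𝓝 (P x₀))

/-- `P ∈ P_w(ⁿE)`: continuous `n`-homogeneous and weakly continuous on bounded sets. -/
def WCB (n : ℕ) (P : E → ℝ) : Prop := IsHomogPoly n P ∧ ∀ x₀ : E, WCBat P x₀

/-- `P ∈ P_{w0}(ⁿE)`: weakly continuous on bounded sets at `0`. -/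
def WCB0 (n : ℕ) (P : E → ℝ) : Prop := IsHomogPoly n P ∧ WCBat P 0

end PolyDefs

/-- `P_w(ⁿE)` is an M-ideal in `P(ⁿE)`, via the 3-ball property
([HWW, Theorem I.2.2 (iv)]). -/
def PolyMIdeal (n : ℕ) (E : Type u) [NormedAddCommGroup E] [NormedSpace ℝ E] : Prop :=
  ∀ P₁ P₂ P₃ Q : E → ℝ, WCB n P₁ → WCB n P₂ → WCB n P₃ →
    polyNorm P₁ ≤ 1 → polyNorm P₂ ≤ 1 → polyNorm P₃ ≤ 1 →
    IsHomogPoly n Q → polyNorm Q ≤ 1 → ∀ ε : ℝ, 0 < ε →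
    ∃ P : E → ℝ, WCB n P ∧ polyNorm (fun x => Q x + P₁ x - P x) ≤ 1 + ε ∧
      polyNorm (fun x => Q x + P₂ x - P x) ≤ 1 + ε ∧
      polyNorm (fun x => Q x + P₃ x - P x) ≤ 1 + ε

set_option linter.unusedSectionVars false
section Aux2

variable {E : Type u} [NormedAddCommGroup E] [NormedSpace ℝ E]
variable {G : Type u} [NormedAddCommGroup G] [NormedSpace ℝ G]

lemma polyNorm_le' {P : E → ℝ} {b : ℝ} (h : ∀ x : E, ‖x‖ ≤ 1 → |P x| ≤ b) :
    polyNorm P ≤ b := by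
  refine csSup_le ⟨|P 0|, 0, by simp, rfl⟩ ?_
  rintro r ⟨x, hx, rfl⟩
  exact h x hx

lemma bddAbove_polySet {n : ℕ} {P : E → ℝ} (hP : IsHomogPoly n P) :
    BddAbove {r : ℝ | ∃ x : E, ‖x‖ ≤ 1 ∧ r = |P x|} := by
  obtain ⟨M, hM⟩ := hP
  refine ⟨‖M‖, ?_⟩
  rintro r ⟨x, hx, rfl⟩
  rw [hM]
  calc |M (fun _ => x)| ≤ ‖M‖ * ∏ _i : Fin n, ‖x‖ := M.le_opNorm _
    _ ≤ ‖M‖ * 1 := by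
        refine mul_le_mul_of_nonneg_left ?_ (norm_nonneg M)
        exact Finset.prod_le_one (fun i _ => norm_nonneg x) (fun i _ => hx)
    _ = ‖M‖ := mul_one _

lemma abs_le_polyNorm' {n : ℕ} {P : E → ℝ} (hP : IsHomogPoly n P) {x : E} (hx : ‖x‖ ≤ 1) :
    |P x| ≤ polyNorm P :=
  le_csSup (bddAbove_polySet hP) ⟨x, hx, rfl⟩

lemma IsHomogPoly.comp' {n : ℕ} {P : E → ℝ} (hP : IsHomogPoly n P) (T : G →L[ℝ] E) :
    IsHomogPoly n (fun x => P (T x)) := by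
  obtain ⟨M, hM⟩ := hP
  exact ⟨M.compContinuousLinearMap (fun _ => T), fun x => by simp [hM]⟩

lemma WCB.comp' {n : ℕ} {P : E → ℝ} (hP : WCB n P) (T : G →L[ℝ] E)
    (hT : ∀ x, ‖T x‖ ≤ ‖x‖) : WCB n (fun x => P (T x)) := by
  refine ⟨hP.1.comp' T, fun x₀ ι l hl x hb hw => ?_⟩
  obtain ⟨C, hC⟩ := hb
  exact hP.2 (T x₀) ι l hl (fun i => T (x i)) ⟨C, fun i => (hT _).trans (hC i)⟩
    (fun γ => hw (γ.comp T))

lemma polyNorm_comp_le' {n : ℕ} {P : E → ℝ} (hP : IsHomogPoly n P) (T : G →L[ℝ] E)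
    (hT : ∀ x, ‖T x‖ ≤ ‖x‖) : polyNorm (fun x => P (T x)) ≤ polyNorm P :=
  polyNorm_le' fun x hx => abs_le_polyNorm' hP ((hT x).trans hx)

lemma IsHomogPoly.add_sub' {n : ℕ} {A B C : E → ℝ} (hA : IsHomogPoly n A)
    (hB : IsHomogPoly n B) (hC : IsHomogPoly n C) :
    IsHomogPoly n (fun x => A x + B x - C x) := by
  obtain ⟨MA, hMA⟩ := hA
  obtain ⟨MB, hMB⟩ := hB
  obtain ⟨MC, hMC⟩ := hC
  exact ⟨MA + MB - MC, fun x => by simp [hMA, hMB, hMC]⟩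

end Aux2


/-- If `F` is a 1-complemented subspace of `E` and `P_w(ⁿE)` is an M-ideal in `P(ⁿE)`,
then `P_w(ⁿF)` is an M-ideal in `P(ⁿF)`. -/
theorem stmt5 {E : Type u} [NormedAddCommGroup E] [NormedSpace ℝ E]
    (F : Submodule ℝ E) (n : ℕ) (hn : 2 ≤ n)
    (π : E →L[ℝ] E) (hproj : ∀ x, π (π x) = π x) (hnorm : ‖π‖ = 1)
    (hmem : ∀ x : E, π x ∈ F) (hfix : ∀ y ∈ F, π y = y)
    (hE : PolyMIdeal n E) :
    PolyMIdeal n ↥F := by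
  intro P₁ P₂ P₃ Q h1 h2 h3 hb1 hb2 hb3 hQ hbQ ε hε
  set πF : E →L[ℝ] ↥F := π.codRestrict F hmem with hπFdef
  have hπF : ∀ x : E, ‖πF x‖ ≤ ‖x‖ := by
    intro x
    have h : ‖πF x‖ = ‖π x‖ := rfl
    rw [h]
    calc ‖π x‖ ≤ ‖π‖ * ‖x‖ := π.le_opNorm x
      _ = ‖x‖ := by rw [hnorm, one_mul]
  have hincl : ∀ y : ↥F, ‖F.subtypeL y‖ ≤ ‖y‖ := fun y => le_of_eq rfl
  have hfixF : ∀ y : ↥F, πF (y : E) = y := fun y => Subtype.ext (hfix y y.2)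
  obtain ⟨P, hP, c1, c2, c3⟩ :=
    hE (fun x => P₁ (πF x)) (fun x => P₂ (πF x)) (fun x => P₃ (πF x)) (fun x => Q (πF x))
      (h1.comp' πF hπF) (h2.comp' πF hπF) (h3.comp' πF hπF)
      ((polyNorm_comp_le' h1.1 πF hπF).trans hb1)
      ((polyNorm_comp_le' h2.1 πF hπF).trans hb2)
      ((polyNorm_comp_le' h3.1 πF hπF).trans hb3)
      (hQ.comp' πF) ((polyNorm_comp_le' hQ πF hπF).trans hbQ) ε hε
  refine ⟨fun y => P (F.subtypeL y), hP.comp' F.subtypeL hincl, ?_, ?_, ?_⟩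
  · refine polyNorm_le' fun y hy => ?_
    have hG : IsHomogPoly n (fun x => Q (πF x) + P₁ (πF x) - P x) :=
      (hQ.comp' πF).add_sub' (h1.1.comp' πF) hP.1
    have h := (abs_le_polyNorm' hG (x := (y : E)) hy).trans c1
    simpa [hfixF y] using h
  · refine polyNorm_le' fun y hy => ?_
    have hG : IsHomogPoly n (fun x => Q (πF x) + P₂ (πF x) - P x) :=
      (hQ.comp' πF).add_sub' (h2.1.comp' πF) hP.1
    have h := (abs_le_polyNorm' hG (x := (y : E)) hy).trans c2
    simpa [hfixF y] using h
  · refine polyNorm_le' fun y hy => ?_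
    have hG : IsHomogPoly n (fun x => Q (πF x) + P₃ (πF x) - P x) :=
      (hQ.comp' πF).add_sub' (h3.1.comp' πF) hP.1
    have h := (abs_le_polyNorm' hG (x := (y : E)) hy).trans c3
    simpa [hfixF y] using h
end
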